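/- Let C be a finite lattice of languages over a finite alphabet A. Then C is quotienting (closed under left and right quotients by words) if and only if the canonical preorder ≤_C is compatible with concatenation: for all words u, u', v, v', if u ≤_C u' and v ≤_C v' then uv ≤_C u'v'. -/

import Mathlib

def IsLatticeClass {A : Type*} (C : Set (Set (List A))) : Prop :=
  ∅ ∈ C ∧ Set.univ ∈ C ∧ (∀ K L : Set (List A), K ∈ C → L ∈ C → K ∪ L ∈ C) ∧
    (∀ K L : Set (List A), K ∈ C → L ∈ C → K ∩ L ∈ C)

/-- `C` is quotienting: closed under left and right quotients by words. -/
def IsQuotienting {A : Type*} (C : Set (Set (List A))) : Prop :=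
  ∀ L ∈ C, ∀ w : List A, {u | w ++ u ∈ L} ∈ C ∧ {u | u ++ w ∈ L} ∈ C

/-- Canonical preorder `≤_C`. -/
def CanPre {A : Type*} (C : Set (Set (List A))) (w w' : List A) : Prop :=
  ∀ L ∈ C, w ∈ L → w' ∈ L

lemma sInter_mem_of_lattice {A : Type*} {C : Set (Set (List A))} (hlat : IsLatticeClass C)
    {T : Set (Set (List A))} (hT : T.Finite) (hTC : T ⊆ C) : ⋂₀ T ∈ C := by
  refine Set.Finite.induction_on_subset (motive := fun T _ => ⋂₀ T ∈ C) T hT (by simpa using hlat.2.1) ?_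
  intro a s haT _ _ ih
  rw [Set.sInter_insert]
  exact hlat.2.2.2 _ _ (hTC haT) ih

lemma sUnion_mem_of_lattice {A : Type*} {C : Set (Set (List A))} (hlat : IsLatticeClass C)
    {T : Set (Set (List A))} (hT : T.Finite) (hTC : T ⊆ C) : ⋃₀ T ∈ C := by
  refine Set.Finite.induction_on_subset (motive := fun T _ => ⋃₀ T ∈ C) T hT (by simpa using hlat.1) ?_
  intro a s haT _ _ ih
  rw [Set.sUnion_insert]
  exact hlat.2.2.1 _ _ (hTC haT) ih

/-- A finite lattice `C` is quotienting iff its canonical preorder is compatible with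
concatenation. -/
theorem stmt2 {A : Type*} [Fintype A] (C : Set (Set (List A)))
    (hfin : C.Finite) (hlat : IsLatticeClass C) :
    IsQuotienting C ↔
      ∀ u u' v v' : List A, CanPre C u u' → CanPre C v v' → CanPre C (u ++ v) (u' ++ v') := by
  constructor
  · intro hq u u' v v' huu hvv L hL huvL
    have h1 : u ++ v' ∈ L := hvv _ ((hq L hL u).1) huvL
    exact huu _ ((hq L hL v').2) h1
  · intro hcomp L hL w
    -- minimal language of C containing a word
    set minL : List A → Set (List A) := fun x => ⋂₀ {K ∈ C | x ∈ K} with hminL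
    have hminC : ∀ x, minL x ∈ C := fun x =>
      sInter_mem_of_lattice hlat (hfin.subset (fun K hK => hK.1)) (fun K hK => hK.1)
    have hself : ∀ x, x ∈ minL x := fun x K hK => hK.2
    have hle : ∀ x y, y ∈ minL x → CanPre C x y := by
      intro x y hy K hK hx
      exact hy K ⟨hK, hx⟩
    have hSfin : ∀ P : Set (List A), (minL '' P).Finite := by
      intro P
      apply Set.Finite.subset ((hfin.finite_subsets).image (fun T : Set (Set (List A)) => ⋂₀ T))
      rintro _ ⟨x, _, rfl⟩
      exact ⟨{K ∈ C | x ∈ K}, fun K hK => hK.1, rfl⟩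
    have key : ∀ P : Set (List A), (∀ x y, x ∈ P → CanPre C x y → y ∈ P) →
        P = ⋃₀ (minL '' P) := by
      intro P hsat
      ext y
      constructor
      · intro hy
        exact ⟨minL y, ⟨y, hy, rfl⟩, hself y⟩
      · rintro ⟨_, ⟨x, hx, rfl⟩, hyx⟩
        exact hsat x y hx (hle x y hyx)
    constructor
    · have hsat : ∀ x y, x ∈ {u | w ++ u ∈ L} → CanPre C x y → y ∈ {u | w ++ u ∈ L} := by
        intro x y hx hxy
        exact hcomp w w x y (fun K _ h => h) hxy L hL hx
      rw [key _ hsat]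
      exact sUnion_mem_of_lattice hlat (hSfin _) (by rintro _ ⟨x, _, rfl⟩; exact hminC x)
    · have hsat : ∀ x y, x ∈ {u | u ++ w ∈ L} → CanPre C x y → y ∈ {u | u ++ w ∈ L} := by
        intro x y hx hxy
        exact hcomp x y w w hxy (fun K _ h => h) L hL hx
      rw [key _ hsat]
      exact sUnion_mem_of_lattice hlat (hSfin _) (by rintro _ ⟨x, _, rfl⟩; exact hminC x)
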